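/- For the 2⊗3 state ρ_{u,c} = u(|02⟩⟨02| + |12⟩⟨12|) + f(|φ⁺⟩⟨φ⁺| + |φ⁻⟩⟨φ⁻| + |ψ⁺⟩⟨ψ⁺|) + c|ψ⁻⟩⟨ψ⁻|, where |φ±⟩ = (|00⟩±|11⟩)/√2, |ψ±⟩=(|01⟩±|10⟩)/√2, 2u + 3f + c = 1, u,c,f ≥ 0, the partial transpose ρ_{u,c}^{τ_B} is positive semidefinite if and only if 3f − c ≥ 0, i.e. u + c ≤ 1/2. -/

import Mathlib

open Matrix ComplexOrder

/-- Partial transpose on the second tensor factor. -/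
def ptB {m n : ℕ} (ρ : Matrix (Fin m × Fin n) (Fin m × Fin n) ℂ) :
    Matrix (Fin m × Fin n) (Fin m × Fin n) ℂ :=
  fun p q => ρ (p.1, q.2) (q.1, p.2)

/-- Outer product |v⟩⟨v|. -/
noncomputable def outer {n : Type*} (v : n → ℂ) : Matrix n n ℂ :=
  Matrix.vecMulVec v (fun j => star (v j))

/-- |φ⁺⟩ = (|00⟩+|11⟩)/√2 embedded in ℂ²⊗ℂ³. -/
noncomputable def phiP : Fin 2 × Fin 3 → ℂ := fun p =>
  if p = (0, 0) then (1 : ℂ) / Real.sqrt 2 else if p = (1, 1) then (1 : ℂ) / Real.sqrt 2 else 0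

/-- |φ⁻⟩ = (|00⟩−|11⟩)/√2 embedded in ℂ²⊗ℂ³. -/
noncomputable def phiM : Fin 2 × Fin 3 → ℂ := fun p =>
  if p = (0, 0) then (1 : ℂ) / Real.sqrt 2 else if p = (1, 1) then -(1 : ℂ) / Real.sqrt 2 else 0

/-- |ψ⁺⟩ = (|01⟩+|10⟩)/√2 embedded in ℂ²⊗ℂ³. -/
noncomputable def psiP : Fin 2 × Fin 3 → ℂ := fun p =>
  if p = (0, 1) then (1 : ℂ) / Real.sqrt 2 else if p = (1, 0) then (1 : ℂ) / Real.sqrt 2 else 0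

/-- |ψ⁻⟩ = (|01⟩−|10⟩)/√2 embedded in ℂ²⊗ℂ³. -/
noncomputable def psiM : Fin 2 × Fin 3 → ℂ := fun p =>
  if p = (0, 1) then (1 : ℂ) / Real.sqrt 2 else if p = (1, 0) then -(1 : ℂ) / Real.sqrt 2 else 0

/-- |02⟩. -/
def ket02 : Fin 2 × Fin 3 → ℂ := fun p => if p = (0, 2) then 1 else 0

/-- |12⟩. -/
def ket12 : Fin 2 × Fin 3 → ℂ := fun p => if p = (1, 2) then 1 else 0

/-- The two-parameter 2⊗3 state ρ_{u,c}. -/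
noncomputable def rhoUC (u c f : ℝ) : Matrix (Fin 2 × Fin 3) (Fin 2 × Fin 3) ℂ :=
  (u : ℂ) • (outer ket02 + outer ket12) +
  (f : ℂ) • (outer phiP + outer phiM + outer psiP) + (c : ℂ) • outer psiM

/-- auxiliary vectors -/
def vP : Fin 2 × Fin 3 → ℂ := fun p => if p = (0,0) then 1 else if p = (1,1) then 1 else 0
def vM : Fin 2 × Fin 3 → ℂ := fun p => if p = (0,0) then 1 else if p = (1,1) then -1 else 0
def e01 : Fin 2 × Fin 3 → ℂ := fun p => if p = (0,1) then 1 else 0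
def e10 : Fin 2 × Fin 3 → ℂ := fun p => if p = (1,0) then 1 else 0

lemma outer_posSemidef {n : Type*} [Fintype n] [DecidableEq n] (v : n → ℂ) :
    (outer v).PosSemidef := by
  have : outer v = replicateCol Unit v * (replicateCol Unit v)ᴴ := by
    rw [conjTranspose_replicateCol, ← vecMulVec_eq]; rfl
  rw [this]
  exact posSemidef_self_mul_conjTranspose _

lemma smul_psd {n : Type*} [Fintype n] [DecidableEq n] {r : ℝ} (hr : 0 ≤ r)
    {M : Matrix n n ℂ} (hM : M.PosSemidef) : ((r : ℂ) • M).PosSemidef := by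
  refine PosSemidef.of_dotProduct_mulVec_nonneg ?_ ?_
  · unfold Matrix.IsHermitian
    rw [conjTranspose_smul, hM.1.eq]
    simp
  · intro x
    rw [smul_mulVec, dotProduct_smul, smul_eq_mul]
    exact mul_nonneg (by exact_mod_cast hr) (hM.dotProduct_mulVec_nonneg x)

set_option maxHeartbeats 2000000 in
lemma key_decomp (u c f : ℝ) :
    ptB (rhoUC u c f) =
      (((3*f - c)/4 : ℝ) : ℂ) • outer vP + (((f + c)/4 : ℝ) : ℂ) • outer vM +
      (((f + c)/2 : ℝ) : ℂ) • (outer e01 + outer e10) +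
      (u : ℂ) • (outer ket02 + outer ket12) := by
  have h2 : ((Real.sqrt 2 : ℝ) : ℂ) * ((Real.sqrt 2 : ℝ) : ℂ) = 2 := by
    rw [← Complex.ofReal_mul, Real.mul_self_sqrt (by norm_num)]
    norm_num
  have hinv : (((Real.sqrt 2 : ℝ) : ℂ))⁻¹ ^ 2 = 1/2 := by
    rw [inv_pow, sq, h2]; norm_num
  ext ⟨i, j⟩ ⟨k, l⟩
  fin_cases i <;> fin_cases j <;> fin_cases k <;> fin_cases l <;>
    simp [ptB, rhoUC, outer, vecMulVec, phiP, phiM, psiP, psiM, ket02, ket12, vP, vM, e01, e10,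
      Prod.ext_iff, div_mul_div_comm, h2] <;> ring_nf <;> simp [hinv] <;> ring_nf

lemma quad_vP (u c f : ℝ) :
    star vP ⬝ᵥ ((((3*f - c)/4 : ℝ) : ℂ) • outer vP + (((f + c)/4 : ℝ) : ℂ) • outer vM +
      (((f + c)/2 : ℝ) : ℂ) • (outer e01 + outer e10) +
      (u : ℂ) • (outer ket02 + outer ket12)) *ᵥ vP = ((3*f - c : ℝ) : ℂ) := by
  simp [dotProduct, mulVec, Fintype.sum_prod_type, Fin.sum_univ_succ, outer, vecMulVec,
    vP, vM, e01, e10, ket02, ket12, Prod.ext_iff]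
  ring

theorem stmt9 (u c f : ℝ) (hu : 0 ≤ u) (hc : 0 ≤ c) (hf : 0 ≤ f)
    (hsum : 2 * u + 3 * f + c = 1) :
    (ptB (rhoUC u c f)).PosSemidef ↔ 0 ≤ 3 * f - c := by
  rw [key_decomp]
  constructor
  · intro h
    have := h.dotProduct_mulVec_nonneg vP
    rw [quad_vP] at this
    exact Complex.zero_le_real.mp this
  · intro h
    refine (((smul_psd (by linarith) (outer_posSemidef vP)).add
      (smul_psd (by linarith) (outer_posSemidef vM))).add
      (smul_psd (by linarith) ((outer_posSemidef e01).add (outer_posSemidef e10)))).add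
      (smul_psd hu ((outer_posSemidef ket02).add (outer_posSemidef ket12)))
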